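/- Let X be a homogeneous and spatially independent random subcomplex of Δₙ. Then there exists p = (p₀,…,p_{n−1}) ∈ [0,1]^n such that P(X = Y) = ∏_{i=0}^{n−1} p_i^{f_i(Y)} (1−p_i)^{e_i(Y)} for every Y ∈ Sₙ, i.e. X ~ X(n,p). Moreover one may take p_k := P({1,…,k+1} ∈ X | ∂{1,…,k+1} ⊆ X) if P(∂{1,…,k+1} ⊆ X) > 0 and p_k := 0 otherwise, where ∂σ denotes the simplicial complex consisting of all strict subsets of σ. -/

import Mathlib

open MeasureTheory Finset Filter


/-- A (sub)complex of the complete complex on the vertex type `V`: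
a family of finite subsets closed under taking subsets and containing `∅`. -/
def SComplex {V : Type*} [DecidableEq V] (Y : Finset (Finset V)) : Prop :=
  ∅ ∈ Y ∧ ∀ σ ∈ Y, ∀ τ ∈ σ.powerset, τ ∈ Y

instance {V : Type*} [DecidableEq V] :
    DecidablePred (fun Y : Finset (Finset V) => SComplex Y) :=
  fun Y => decidable_of_iff (∅ ∈ Y ∧ ∀ σ ∈ Y, ∀ τ ∈ σ.powerset, τ ∈ Y) Iff.rfl

/-- `scount Y m` = number of simplices of `Y` with `m` vertices (i.e. `(m-1)`-simplices);
`f_k(Y) = scount Y (k+1)` and `f_{-1}(Y) = scount Y 0`. -/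
def scount {V : Type*} (Y : Finset (Finset V)) (m : ℕ) : ℕ :=
  (Y.filter (fun σ => σ.card = m)).card

/-- Number of external `i`-simplices of `Y` in the complete complex on `Fin n`:
`i`-simplices `σ ∉ Y` all of whose strict subsets lie in `Y`. -/
def ecount {n : ℕ} (Y : Finset (Finset (Fin n))) (i : ℕ) : ℕ :=
  (Finset.univ.filter (fun σ : Finset (Fin n) =>
    σ.card = i + 1 ∧ σ ∉ Y ∧ ∀ τ ∈ σ.powerset, τ ≠ σ → τ ∈ Y)).card

/-- The weight `∏_{i=0}^{n-1} p_i^{f_i(Y)} (1-p_i)^{e_i(Y)}` of the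
multi-parameter random simplicial complex model. -/
noncomputable def mpWeight {n : ℕ} (p : Fin n → ℝ) (Y : Finset (Finset (Fin n))) : ℝ :=
  ∏ i : Fin n, p i ^ scount Y (i.1 + 1) * (1 - p i) ^ ecount Y i.1

/-- The probability of an event, as a real number. -/
noncomputable def prb {Ω : Type*} [MeasurableSpace Ω] (μ : Measure Ω) (A : Set Ω) : ℝ :=
  (μ A).toReal

/-- Conditional probability `P(A | B)`, as a real number. -/
noncomputable def condP {Ω : Type*} [MeasurableSpace Ω] (μ : Measure Ω) (A B : Set Ω) : ℝ :=
  prb μ (A ∩ B) / prb μ B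

/-- A random subcomplex is homogeneous if its distribution is invariant under
every permutation of the vertices. -/
def Homogeneous {n : ℕ} {Ω : Type*} [MeasurableSpace Ω] (μ : Measure Ω)
    (X : Ω → Finset (Finset (Fin n))) : Prop :=
  ∀ (g : Equiv.Perm (Fin n)) (Y : Finset (Finset (Fin n))),
    prb μ {ω | Finset.image (fun σ => σ.image (⇑g)) (X ω) = Y} = prb μ {ω | X ω = Y}

/-- Spatial independence of a random subcomplex. -/
def SpatInd {n : ℕ} {Ω : Type*} [MeasurableSpace Ω] (μ : Measure Ω)
    (X : Ω → Finset (Finset (Fin n))) : Prop :=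
  ∀ Y₁ Y₂ : Finset (Finset (Fin n)), SComplex Y₁ → SComplex Y₂ →
    prb μ {ω | Y₁ ∪ Y₂ ⊆ X ω} * prb μ {ω | Y₁ ∩ Y₂ ⊆ X ω} =
      prb μ {ω | Y₁ ⊆ X ω} * prb μ {ω | Y₂ ⊆ X ω}

/-- The `k`-dimensional standard simplex `{0, 1, …, k}` in `Fin n`
(for `k = -1` this is the empty simplex). -/
def stdSimp (n : ℕ) (k : ℤ) : Finset (Fin n) :=
  Finset.univ.filter (fun v => (v : ℤ) ≤ k)

/-- The `k`-dimensional simplex `{1, 2, …, k+1}` in `Fin n`,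
sharing `k` vertices with `stdSimp n k`. -/
def stdSimp' (n : ℕ) (k : ℕ) : Finset (Fin n) :=
  Finset.univ.filter (fun v => 1 ≤ (v : ℕ) ∧ (v : ℕ) ≤ k + 1)

/-- The parameter `q_k = P(τ ∈ X)` for a `k`-simplex `τ` (with `q_{-1} = 1`). -/
noncomputable def qpar {n : ℕ} {Ω : Type*} [MeasurableSpace Ω] (μ : Measure Ω)
    (X : Ω → Finset (Finset (Fin n))) (k : ℤ) : ℝ :=
  if k < 0 then 1 else prb μ {ω | stdSimp n k ∈ X ω}

/-- The parameter `r_k = P(σ ∈ X | τ ∈ X)` for a `(k+1)`-simplex `σ` containing the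
`k`-simplex `τ`, if `q_k > 0`, and `0` otherwise (with `r_{-1} = q_0`). -/
noncomputable def rpar {n : ℕ} {Ω : Type*} [MeasurableSpace Ω] (μ : Measure Ω)
    (X : Ω → Finset (Finset (Fin n))) (k : ℤ) : ℝ :=
  if 0 < qpar μ X k then
    condP μ {ω | stdSimp n (k + 1) ∈ X ω} {ω | stdSimp n k ∈ X ω}
  else 0

/-- The parameter `s_k = P(τ₁ ∪ τ₂ ∈ X | τ₁ ∈ X, τ₂ ∈ X)` for `k`-simplices `τ₁, τ₂`
sharing `k` vertices, if `P(τ₁ ∈ X, τ₂ ∈ X) > 0`, and `0` otherwise. -/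
noncomputable def spar {n : ℕ} {Ω : Type*} [MeasurableSpace Ω] (μ : Measure Ω)
    (X : Ω → Finset (Finset (Fin n))) (k : ℕ) : ℝ :=
  if 0 < prb μ ({ω | stdSimp n k ∈ X ω} ∩ {ω | stdSimp' n k ∈ X ω}) then
    condP μ {ω | stdSimp n (k + 1) ∈ X ω}
      ({ω | stdSimp n k ∈ X ω} ∩ {ω | stdSimp' n k ∈ X ω})
  else 0

section Helpers

open Equiv

variable {n : ℕ}

private lemma perm_image_powerset (g : Equiv.Perm (Fin n)) (s : Finset (Fin n)) :
    (s.image g).powerset = s.powerset.image (fun t => t.image g) := by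
  ext t
  simp only [mem_powerset, mem_image]
  constructor
  · intro h
    refine ⟨t.image g.symm, ?_, ?_⟩
    · intro x hx
      simp only [Finset.mem_image] at hx
      obtain ⟨y, hy, rfl⟩ := hx
      have := h hy
      simp only [Finset.mem_image] at this
      obtain ⟨z, hz, hz2⟩ := this
      have : z = g.symm y := by
        apply g.injective; simp [hz2]
      rwa [← this]
    · ext x; simp [Finset.mem_image]
  · rintro ⟨u, hu, rfl⟩
    exact Finset.image_subset_image hu

private lemma exists_perm_image {s t : Finset (Fin n)} (h : s.card = t.card) :
    ∃ g : Equiv.Perm (Fin n), s.image g = t := by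
  classical
  have h' : sᶜ.card = tᶜ.card := by
    simp [Finset.card_compl, h]
  let e : {x // x ∈ s} ≃ {x // x ∈ t} := Finset.equivOfCardEq h
  let e' : {x // x ∈ sᶜ} ≃ {x // x ∈ tᶜ} := Finset.equivOfCardEq h'
  let e₂ : {x : Fin n // ¬ x ∈ s} ≃ {x : Fin n // ¬ x ∈ t} :=
    ((Equiv.subtypeEquivRight (fun x => by simp)).trans e').trans
      (Equiv.subtypeEquivRight (fun x => by simp))
  have key : ∀ (x : Fin n) (h : x ∈ s), Equiv.subtypeCongr e e₂ x = e ⟨x, h⟩ := by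
    intro x h
    simp [Equiv.subtypeCongr, h]
  refine ⟨Equiv.subtypeCongr e e₂, ?_⟩
  apply Finset.eq_of_subset_of_card_le
  · intro x hx
    simp only [Finset.mem_image] at hx
    obtain ⟨y, hy, rfl⟩ := hx
    rw [key y hy]
    exact (e ⟨y, hy⟩).2
  · rw [Finset.card_image_of_injective _ (Equiv.injective _), h]

/-- The action of a permutation on a family of simplices. -/
private def imgc (g : Equiv.Perm (Fin n)) (Y : Finset (Finset (Fin n))) :
    Finset (Finset (Fin n)) :=
  Y.image (fun σ => σ.image (⇑g))

private lemma imgc_imgc (g h : Equiv.Perm (Fin n)) (Y : Finset (Finset (Fin n))) :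
    imgc g (imgc h Y) = imgc (h.trans g) Y := by
  simp [imgc, Finset.image_image, Function.comp_def]

private lemma imgc_inv_imgc (g : Equiv.Perm (Fin n)) (Y : Finset (Finset (Fin n))) :
    imgc g⁻¹ (imgc g Y) = Y := by
  rw [imgc_imgc]
  have : (g.trans g⁻¹) = Equiv.refl (Fin n) := by
    ext x; simp
  simp [this, imgc]

private lemma imgc_imgc_inv (g : Equiv.Perm (Fin n)) (Y : Finset (Finset (Fin n))) :
    imgc g (imgc g⁻¹ Y) = Y := by
  have := imgc_inv_imgc g⁻¹ Y
  simpa using this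

private lemma imgc_injective (g : Equiv.Perm (Fin n)) :
    Function.Injective (imgc (n := n) g) := fun Y Z h => by
  have := congrArg (imgc g⁻¹) h
  rwa [imgc_inv_imgc, imgc_inv_imgc] at this

private lemma imgc_subset_iff (g : Equiv.Perm (Fin n)) {Y Z : Finset (Finset (Fin n))} :
    imgc g Y ⊆ imgc g Z ↔ Y ⊆ Z := by
  constructor
  · intro h
    have := Finset.image_subset_image (f := fun σ : Finset (Fin n) => σ.image (⇑g⁻¹)) h
    rw [show (imgc g Y).image (fun σ : Finset (Fin n) => σ.image (⇑g⁻¹)) = imgc g⁻¹ (imgc g Y) from rfl,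
      show (imgc g Z).image (fun σ : Finset (Fin n) => σ.image (⇑g⁻¹)) = imgc g⁻¹ (imgc g Z) from rfl,
      imgc_inv_imgc, imgc_inv_imgc] at this
    exact this
  · exact fun h => Finset.image_subset_image h

private lemma imgc_powerset (g : Equiv.Perm (Fin n)) (s : Finset (Fin n)) :
    imgc g s.powerset = (s.image ⇑g).powerset := (perm_image_powerset g s).symm

private lemma imgc_erase (g : Equiv.Perm (Fin n)) (Y : Finset (Finset (Fin n)))
    (σ : Finset (Fin n)) :
    imgc g (Y.erase σ) = (imgc g Y).erase (σ.image ⇑g) := by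
  unfold imgc
  rw [Finset.image_erase]
  intro a b hab
  exact Finset.image_injective (g.injective) hab

private lemma stdSimp_card (k : ℕ) (hk : k < n) : (stdSimp n (k : ℤ)).card = k + 1 := by
  have him : stdSimp n (k : ℤ) = Finset.image (Fin.castLE hk) Finset.univ := by
    ext x
    simp only [stdSimp, Finset.mem_filter, Finset.mem_univ, true_and, Finset.mem_image]
    constructor
    · intro h
      have h' : (x : ℕ) ≤ k := by exact_mod_cast h
      exact ⟨⟨x, by omega⟩, by simp [Fin.ext_iff]⟩
    · rintro ⟨y, rfl⟩
      have : (y : ℕ) ≤ k := Nat.lt_succ_iff.mp y.2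
      exact_mod_cast this
  rw [him, Finset.card_image_of_injective _ (Fin.castLE_injective _), Finset.card_univ,
    Fintype.card_fin]

end Helpers
section MeasureLayer

variable {n : ℕ} {Ω : Type*} [MeasurableSpace Ω] (μ : Measure Ω)
  (X : Ω → Finset (Finset (Fin n)))

/-- Point probability. -/
private noncomputable def nuP (W : Finset (Finset (Fin n))) : ℝ := prb μ {ω | X ω = W}

/-- Containment probability. -/
private noncomputable def FP (Z : Finset (Finset (Fin n))) : ℝ := prb μ {ω | Z ⊆ X ω}

private lemma prb_nonneg (A : Set Ω) : 0 ≤ prb μ A := ENNReal.toReal_nonneg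

omit [MeasurableSpace Ω] in
private lemma sub_event_eq (Z : Finset (Finset (Fin n))) :
    {ω | Z ⊆ X ω} = ⋃ W ∈ (Finset.univ.filter fun W => Z ⊆ W), {ω | X ω = W} := by
  ext ω
  simp only [Set.mem_setOf_eq, Set.mem_iUnion, Finset.mem_filter, Finset.mem_univ, true_and]
  exact ⟨fun h => ⟨X ω, h, rfl⟩, by rintro ⟨W, hW, rfl⟩; exact hW⟩

private lemma meas_sub (hmeas : ∀ Y, MeasurableSet {ω | X ω = Y}) (Z : Finset (Finset (Fin n))) :
    MeasurableSet {ω | Z ⊆ X ω} := by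
  rw [sub_event_eq X Z]
  exact (Finset.univ.filter fun W => Z ⊆ W).measurableSet_biUnion (fun W _ => hmeas W)

private lemma FP_eq_sum [IsProbabilityMeasure μ] (hmeas : ∀ Y, MeasurableSet {ω | X ω = Y})
    (Z : Finset (Finset (Fin n))) :
    FP μ X Z = ∑ W ∈ (Finset.univ.filter fun W => Z ⊆ W), nuP μ X W := by
  unfold FP nuP prb
  rw [sub_event_eq X Z, measure_biUnion_finset ?_ (fun W _ => hmeas W)]
  · exact ENNReal.toReal_sum (fun W _ => measure_ne_top μ _)
  · intro W₁ _ W₂ _ hne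
    refine Set.disjoint_left.mpr ?_
    rintro ω h1 h2
    exact hne (h1.symm.trans h2)

private lemma FP_mono [IsProbabilityMeasure μ] {Z₁ Z₂ : Finset (Finset (Fin n))}
    (h : Z₁ ⊆ Z₂) : FP μ X Z₂ ≤ FP μ X Z₁ := by
  refine ENNReal.toReal_mono (measure_ne_top μ _) (measure_mono ?_)
  intro ω hω
  exact h.trans hω

private lemma FP_le_one [IsProbabilityMeasure μ] (Z : Finset (Finset (Fin n))) :
    FP μ X Z ≤ 1 := by
  have := ENNReal.toReal_mono (by simp) (prob_le_one (μ := μ) (s := {ω | Z ⊆ X ω}))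
  simpa [FP, prb] using this

private lemma FP_bot [IsProbabilityMeasure μ] (hXc : ∀ ω, SComplex (X ω)) :
    FP μ X {∅} = 1 := by
  have : {ω | ({∅} : Finset (Finset (Fin n))) ⊆ X ω} = Set.univ := by
    ext ω
    simp only [Set.mem_setOf_eq, Set.mem_univ, iff_true, Finset.singleton_subset_iff]
    exact (hXc ω).1
  unfold FP prb
  rw [this]
  simp

private lemma nuP_not_complex (hXc : ∀ ω, SComplex (X ω)) {W : Finset (Finset (Fin n))}
    (hW : ¬ SComplex W) : nuP μ X W = 0 := by
  have : {ω | X ω = W} = (∅ : Set Ω) := by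
    ext ω
    simp only [Set.mem_setOf_eq, Set.mem_empty_iff_false, iff_false]
    intro h
    exact hW (h ▸ hXc ω)
  unfold nuP prb
  rw [this]
  simp

private lemma nuP_perm (hhom : Homogeneous μ X) (g : Equiv.Perm (Fin n))
    (Z : Finset (Finset (Fin n))) : nuP μ X (imgc g Z) = nuP μ X Z := by
  have h := hhom g (imgc g Z)
  have hset : {ω | Finset.image (fun σ => σ.image (⇑g)) (X ω) = imgc g Z} = {ω | X ω = Z} := by
    ext ω
    simp only [Set.mem_setOf_eq]
    exact ⟨fun hh => imgc_injective g hh, fun hh => by rw [show Finset.image (fun σ => σ.image (⇑g)) (X ω) = imgc g (X ω) from rfl, hh]⟩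
  rw [hset] at h
  exact h.symm

private lemma FP_perm [IsProbabilityMeasure μ] (hmeas : ∀ Y, MeasurableSet {ω | X ω = Y})
    (hhom : Homogeneous μ X) (g : Equiv.Perm (Fin n)) (Z : Finset (Finset (Fin n))) :
    FP μ X (imgc g Z) = FP μ X Z := by
  rw [FP_eq_sum μ X hmeas, FP_eq_sum μ X hmeas]
  refine Finset.sum_bij' (fun W _ => imgc g⁻¹ W) (fun W _ => imgc g W) ?_ ?_ ?_ ?_ ?_
  · intro W hW
    simp only [Finset.mem_filter, Finset.mem_univ, true_and] at hW ⊢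
    rw [← imgc_inv_imgc g Z] at hW ⊢
    rw [imgc_imgc_inv] at hW
    exact (imgc_subset_iff g⁻¹).mpr hW
  · intro W hW
    simp only [Finset.mem_filter, Finset.mem_univ, true_and] at hW ⊢
    exact (imgc_subset_iff g).mpr hW
  · intro W _; exact imgc_imgc_inv g W
  · intro W _; exact imgc_inv_imgc g W
  · intro W _
    have h2 := nuP_perm μ X hhom g (imgc g⁻¹ W)
    rw [imgc_imgc_inv] at h2
    exact h2

end MeasureLayer
section ParamLayer

variable {n : ℕ} {Ω : Type*} [MeasurableSpace Ω] (μ : Measure Ω)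
  (X : Ω → Finset (Finset (Fin n)))

/-- The parameter `p_k`. -/
private noncomputable def pPar (k : ℕ) : ℝ :=
  if 0 < prb μ {ω | (stdSimp n k).powerset.erase (stdSimp n k) ⊆ X ω} then
    condP μ {ω | stdSimp n k ∈ X ω}
      {ω | (stdSimp n k).powerset.erase (stdSimp n k) ⊆ X ω}
  else 0

omit [MeasurableSpace Ω] in
private lemma inter_event (σ : Finset (Fin n)) :
    {ω | σ ∈ X ω} ∩ {ω | σ.powerset.erase σ ⊆ X ω} = {ω | σ.powerset ⊆ X ω} := by
  ext ω
  simp only [Set.mem_inter_iff, Set.mem_setOf_eq]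
  constructor
  · rintro ⟨h1, h2⟩ τ hτ
    by_cases hts : τ = σ
    · rwa [hts]
    · exact h2 (Finset.mem_erase.mpr ⟨hts, hτ⟩)
  · intro h
    exact ⟨h (Finset.mem_powerset_self σ), fun τ hτ => h (Finset.mem_of_mem_erase hτ)⟩

private lemma pPar_eq (k : ℕ) :
    pPar μ X k =
      if 0 < FP μ X ((stdSimp n k).powerset.erase (stdSimp n k)) then
        FP μ X (stdSimp n k).powerset / FP μ X ((stdSimp n k).powerset.erase (stdSimp n k))
      else 0 := by
  unfold pPar condP FP
  rw [inter_event]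

omit [MeasurableSpace Ω] in
private lemma powerset_complex (σ : Finset (Fin n)) : SComplex σ.powerset :=
  ⟨Finset.empty_mem_powerset σ, fun τ hτ ρ hρ =>
    Finset.mem_powerset.mpr ((Finset.mem_powerset.mp hρ).trans (Finset.mem_powerset.mp hτ))⟩

private lemma FP_powerset_card [IsProbabilityMeasure μ]
    (hmeas : ∀ Y, MeasurableSet {ω | X ω = Y}) (hhom : Homogeneous μ X)
    {σ : Finset (Fin n)} {k : ℕ} (hk : k < n) (hcard : σ.card = k + 1) :
    FP μ X σ.powerset = FP μ X (stdSimp n k).powerset ∧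
      FP μ X (σ.powerset.erase σ) = FP μ X ((stdSimp n k).powerset.erase (stdSimp n k)) := by
  obtain ⟨g, hg⟩ := exists_perm_image ((stdSimp_card k hk).trans hcard.symm)
  have h1 : imgc g (stdSimp n k).powerset = σ.powerset := by
    rw [imgc_powerset, hg]
  have h2 : imgc g ((stdSimp n k).powerset.erase (stdSimp n k)) = σ.powerset.erase σ := by
    rw [imgc_erase, h1, hg]
  constructor
  · rw [← h1, FP_perm μ X hmeas hhom]
  · rw [← h2, FP_perm μ X hmeas hhom]

private lemma FP_prod [IsProbabilityMeasure μ]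
    (hmeas : ∀ Y, MeasurableSet {ω | X ω = Y}) (hXc : ∀ ω, SComplex (X ω))
    (hhom : Homogeneous μ X) (hsi : SpatInd μ X) :
    ∀ Y : Finset (Finset (Fin n)), SComplex Y →
      FP μ X Y = ∏ i : Fin n, pPar μ X i.1 ^ scount Y (i.1 + 1) := by
  intro Y
  induction Y using Finset.strongInduction with
  | _ Y IH =>
    intro hY
    by_cases hempty : ∀ τ ∈ Y, τ = ∅
    · have hYe : Y = {∅} := by
        apply Finset.Subset.antisymm
        · intro τ hτ
          simp [hempty τ hτ]
        · simpa using hY.1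
      rw [hYe, FP_bot μ X hXc]
      symm
      apply Finset.prod_eq_one
      intro i _
      have h0 : scount ({∅} : Finset (Finset (Fin n))) (i.1 + 1) = 0 := by
        unfold scount
        rw [Finset.card_eq_zero]
        ext τ
        simp only [Finset.mem_filter, Finset.mem_singleton, Finset.notMem_empty, iff_false]
        rintro ⟨rfl, h⟩
        simp at h
      rw [h0, pow_zero]
    · push_neg at hempty
      obtain ⟨τ₀, hτ₀Y, hτ₀⟩ := hempty
      obtain ⟨σ, hσY, hσmax⟩ := Finset.exists_max_image Y Finset.card ⟨τ₀, hτ₀Y⟩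
      have h1 : 1 ≤ σ.card :=
        le_trans (Nat.one_le_iff_ne_zero.mpr (fun h => hτ₀.ne_empty (Finset.card_eq_zero.mp h)))
          (hσmax τ₀ hτ₀Y)
      have hcn : σ.card ≤ n := le_trans (Finset.card_le_univ σ) (by simp)
      set k := σ.card - 1 with hkdef
      have hk : k < n := by omega
      have hk1 : k + 1 = σ.card := by omega
      have hpow_sub : σ.powerset ⊆ Y := fun τ hτ => hY.2 σ hσY τ hτ
      have hY' : SComplex (Y.erase σ) := by
        constructor
        · refine Finset.mem_erase.mpr ⟨?_, hY.1⟩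
          intro h
          rw [← h] at h1
          simp at h1
        · intro τ hτ ρ hρ
          have hτY := Finset.mem_of_mem_erase hτ
          refine Finset.mem_erase.mpr ⟨?_, hY.2 τ hτY ρ hρ⟩
          intro hρσ
          subst hρσ
          have hsub : ρ ⊆ τ := Finset.mem_powerset.mp hρ
          have hne : ρ ≠ τ := fun h => (Finset.mem_erase.mp hτ).1 h.symm
          have : ρ.card < τ.card := Finset.card_lt_card (Finset.ssubset_iff_subset_ne.mpr ⟨hsub, hne⟩)
          have := hσmax τ hτY
          omega
      have hunion : Y.erase σ ∪ σ.powerset = Y := by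
        apply Finset.Subset.antisymm
        · intro τ hτ
          rcases Finset.mem_union.mp hτ with h | h
          · exact Finset.mem_of_mem_erase h
          · exact hpow_sub h
        · intro τ hτ
          by_cases hts : τ = σ
          · exact Finset.mem_union_right _ (by rw [hts]; exact Finset.mem_powerset_self σ)
          · exact Finset.mem_union_left _ (Finset.mem_erase.mpr ⟨hts, hτ⟩)
      have hinter : Y.erase σ ∩ σ.powerset = σ.powerset.erase σ := by
        ext τ
        simp only [Finset.mem_inter, Finset.mem_erase]
        constructor
        · rintro ⟨⟨hne, -⟩, hp⟩
          exact ⟨hne, hp⟩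
        · rintro ⟨hne, hp⟩
          refine ⟨⟨hne, hpow_sub hp⟩, hp⟩
      have heq : FP μ X Y * FP μ X (σ.powerset.erase σ) =
          FP μ X (Y.erase σ) * FP μ X σ.powerset := by
        have := hsi (Y.erase σ) σ.powerset hY' (powerset_complex σ)
        rw [hunion, hinter] at this
        exact this
      obtain ⟨hq, hd⟩ := FP_powerset_card μ X hmeas hhom hk hk1.symm
      have hIH := IH (Y.erase σ) (Finset.erase_ssubset hσY) hY'
      have hscount : ∀ i : Fin n,
          scount Y (i.1 + 1) = scount (Y.erase σ) (i.1 + 1) +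
            (if (⟨k, hk⟩ : Fin n) = i then 1 else 0) := by
        intro i
        unfold scount
        rw [Finset.filter_erase]
        by_cases hik : (⟨k, hk⟩ : Fin n) = i
        · rw [if_pos hik]
          have hmem : σ ∈ Finset.filter (fun τ : Finset (Fin n) => τ.card = i.1 + 1) Y := by
            refine Finset.mem_filter.mpr ⟨hσY, ?_⟩
            rw [← hik]
            exact hk1.symm ▸ rfl
          rw [Finset.card_erase_of_mem hmem]
          have : 1 ≤ (Finset.filter (fun τ : Finset (Fin n) => τ.card = i.1 + 1) Y).card :=
            Finset.card_pos.mpr ⟨σ, hmem⟩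
          omega
        · rw [if_neg hik]
          have hnot : σ ∉ Finset.filter (fun τ : Finset (Fin n) => τ.card = i.1 + 1) Y := by
            intro hmem
            have := (Finset.mem_filter.mp hmem).2
            apply hik
            apply Fin.ext
            simp only
            omega
          rw [Finset.erase_eq_of_notMem hnot]
          simp
      have hprod : ∏ i : Fin n, pPar μ X i.1 ^ scount Y (i.1 + 1) =
          (∏ i : Fin n, pPar μ X i.1 ^ scount (Y.erase σ) (i.1 + 1)) * pPar μ X k := by
        calc ∏ i : Fin n, pPar μ X i.1 ^ scount Y (i.1 + 1)
            = ∏ i : Fin n, (pPar μ X i.1 ^ scount (Y.erase σ) (i.1 + 1)) *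
                (if (⟨k, hk⟩ : Fin n) = i then pPar μ X i.1 else 1) := by
              apply Finset.prod_congr rfl
              intro i _
              rw [hscount i, pow_add]
              congr 1
              split <;> simp
          _ = _ := by
              rw [Finset.prod_mul_distrib, Finset.prod_ite_eq]
              simp
      by_cases hdk : 0 < FP μ X ((stdSimp n k).powerset.erase (stdSimp n k))
      · have hpk : pPar μ X k = FP μ X (stdSimp n k).powerset /
            FP μ X ((stdSimp n k).powerset.erase (stdSimp n k)) := by
          rw [pPar_eq, if_pos hdk]
        have hFPY : FP μ X Y = FP μ X (Y.erase σ) * pPar μ X k := by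
          rw [hpk]
          rw [hd, hq] at heq
          field_simp
          linarith [heq]
        rw [hFPY, hIH, hprod]
      · have hd0 : FP μ X ((stdSimp n k).powerset.erase (stdSimp n k)) = 0 :=
          le_antisymm (not_lt.mp hdk) (prb_nonneg μ _)
        have hFPY : FP μ X Y = 0 := by
          have hle : FP μ X Y ≤ FP μ X (σ.powerset.erase σ) :=
            FP_mono μ X ((Finset.erase_subset _ _).trans hpow_sub)
          rw [hd, hd0] at hle
          exact le_antisymm hle (prb_nonneg μ _)
        rw [hFPY]
        symm
        apply Finset.prod_eq_zero (Finset.mem_univ (⟨k, hk⟩ : Fin n))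
        have hpk0 : pPar μ X k = 0 := by
          rw [pPar_eq, if_neg hdk]
        simp only [hpk0]
        apply zero_pow
        unfold scount
        have hmem : σ ∈ Finset.filter (fun τ : Finset (Fin n) => τ.card = k + 1) Y :=
          Finset.mem_filter.mpr ⟨hσY, hk1.symm⟩
        exact Finset.card_ne_zero_of_mem hmem

end ParamLayer
section PointLayer

variable {n : ℕ} {Ω : Type*} [MeasurableSpace Ω] (μ : Measure Ω)
  (X : Ω → Finset (Finset (Fin n)))

/-- The set of external simplices of `Y`. -/
private def extE (Y : Finset (Finset (Fin n))) : Finset (Finset (Fin n)) :=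
  Finset.univ.filter (fun σ => σ ∉ Y ∧ ∀ τ ∈ σ.powerset, τ ≠ σ → τ ∈ Y)

private lemma extE_mem {Y : Finset (Finset (Fin n))} {σ : Finset (Fin n)} :
    σ ∈ extE Y ↔ σ ∉ Y ∧ ∀ τ ∈ σ.powerset, τ ≠ σ → τ ∈ Y := by
  simp [extE]

private lemma extE_disj (Y : Finset (Finset (Fin n))) : Disjoint Y (extE Y) := by
  rw [Finset.disjoint_right]
  intro σ hσ
  exact (extE_mem.mp hσ).1

private lemma extE_nonempty_simp {Y : Finset (Finset (Fin n))} (hY : SComplex Y)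
    {σ : Finset (Fin n)} (hσ : σ ∈ extE Y) : σ ≠ ∅ := by
  intro h
  exact (extE_mem.mp hσ).1 (h ▸ hY.1)

private lemma union_ext_complex {Y S : Finset (Finset (Fin n))} (hY : SComplex Y)
    (hS : S ⊆ extE Y) : SComplex (Y ∪ S) := by
  constructor
  · exact Finset.mem_union_left _ hY.1
  · intro τ hτ ρ hρ
    rcases Finset.mem_union.mp hτ with h | h
    · exact Finset.mem_union_left _ (hY.2 τ h ρ hρ)
    · by_cases hρτ : ρ = τ
      · exact hρτ ▸ hτ
      · exact Finset.mem_union_left _ ((extE_mem.mp (hS h)).2 ρ hρ hρτ)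

private lemma scount_union {Y S : Finset (Finset (Fin n))} (hdisj : Disjoint Y S) (m : ℕ) :
    scount (Y ∪ S) m = scount Y m + scount S m := by
  unfold scount
  rw [Finset.filter_union, Finset.card_union_of_disjoint]
  exact Finset.disjoint_filter_filter hdisj

private lemma eq_of_no_external {Y W : Finset (Finset (Fin n))} (hW : SComplex W)
    (hYW : Y ⊆ W) (hYbot : ∅ ∈ Y) (h : extE Y ∩ W = ∅) : W = Y := by
  by_contra hne
  have hne' : (W \ Y).Nonempty := by
    rw [Finset.sdiff_nonempty]
    intro hsub
    exact hne (le_antisymm hsub hYW)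
  obtain ⟨σ, hσ, hmin⟩ := Finset.exists_min_image (W \ Y) Finset.card hne'
  obtain ⟨hσW, hσY⟩ := Finset.mem_sdiff.mp hσ
  have hext : σ ∈ extE Y := by
    rw [extE_mem]
    refine ⟨hσY, ?_⟩
    intro τ hτ hτσ
    have hτW : τ ∈ W := hW.2 σ hσW τ hτ
    by_contra hτY
    have h1 : σ.card ≤ τ.card := hmin τ (Finset.mem_sdiff.mpr ⟨hτW, hτY⟩)
    have h2 : τ.card < σ.card :=
      Finset.card_lt_card (Finset.ssubset_iff_subset_ne.mpr ⟨Finset.mem_powerset.mp hτ, hτσ⟩)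
    omega
  have : σ ∈ extE Y ∩ W := Finset.mem_inter.mpr ⟨hext, hσW⟩
  rw [h] at this
  exact absurd this (Finset.notMem_empty σ)

omit [MeasurableSpace Ω] in
private lemma sum_pow_neg_one (x : Finset (Finset (Fin n))) :
    (∑ m ∈ x.powerset, (-1 : ℝ) ^ m.card) = if x = ∅ then 1 else 0 := by
  have h1 := Finset.sum_powerset_neg_one_pow_card (x := x)
  have h2 : ((∑ m ∈ x.powerset, (-1 : ℤ) ^ m.card : ℤ) : ℝ)
      = ∑ m ∈ x.powerset, (-1 : ℝ) ^ m.card := by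
    push_cast
    rfl
  rw [← h2, h1]
  split <;> simp

private lemma nuP_signed [IsProbabilityMeasure μ]
    (hmeas : ∀ Y, MeasurableSet {ω | X ω = Y}) (hXc : ∀ ω, SComplex (X ω))
    {Y : Finset (Finset (Fin n))} (hY : SComplex Y) :
    nuP μ X Y = ∑ S ∈ (extE Y).powerset, (-1 : ℝ) ^ S.card * FP μ X (Y ∪ S) := by
  have hstep : ∀ S : Finset (Finset (Fin n)),
      FP μ X (Y ∪ S) = ∑ W ∈ Finset.univ, if Y ∪ S ⊆ W then nuP μ X W else 0 := by
    intro S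
    rw [FP_eq_sum μ X hmeas, Finset.sum_filter]
  symm
  calc ∑ S ∈ (extE Y).powerset, (-1 : ℝ) ^ S.card * FP μ X (Y ∪ S)
      = ∑ S ∈ (extE Y).powerset, ∑ W ∈ Finset.univ,
          (if Y ∪ S ⊆ W then (-1 : ℝ) ^ S.card * nuP μ X W else 0) := by
        apply Finset.sum_congr rfl
        intro S _
        rw [hstep S, Finset.mul_sum]
        apply Finset.sum_congr rfl
        intro W _
        rw [mul_ite, mul_zero]
    _ = ∑ W ∈ Finset.univ, ∑ S ∈ (extE Y).powerset,
          (if Y ∪ S ⊆ W then (-1 : ℝ) ^ S.card * nuP μ X W else 0) := Finset.sum_comm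
    _ = ∑ W ∈ Finset.univ, (if Y ⊆ W ∧ extE Y ∩ W = ∅ then nuP μ X W else 0) := by
        apply Finset.sum_congr rfl
        intro W _
        by_cases hYW : Y ⊆ W
        · calc (∑ S ∈ (extE Y).powerset, if Y ∪ S ⊆ W then (-1 : ℝ) ^ S.card * nuP μ X W else 0)
              = ∑ S ∈ (extE Y ∩ W).powerset, (-1 : ℝ) ^ S.card * nuP μ X W := by
                rw [← Finset.sum_filter]
                apply Finset.sum_congr ?_ (fun _ _ => rfl)
                ext S
                simp only [Finset.mem_filter, Finset.mem_powerset, Finset.union_subset_iff,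
                  Finset.subset_inter_iff]
                tauto
            _ = (∑ S ∈ (extE Y ∩ W).powerset, (-1 : ℝ) ^ S.card) * nuP μ X W := by
                rw [Finset.sum_mul]
            _ = (if extE Y ∩ W = ∅ then 1 else 0) * nuP μ X W := by
                rw [sum_pow_neg_one (extE Y ∩ W)]
            _ = if Y ⊆ W ∧ extE Y ∩ W = ∅ then nuP μ X W else 0 := by
                by_cases h : extE Y ∩ W = ∅ <;> simp [h, hYW]
        · simp [Finset.union_subset_iff, hYW]
    _ = ∑ W ∈ Finset.univ.filter (fun W => Y ⊆ W ∧ extE Y ∩ W = ∅), nuP μ X W := by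
        rw [Finset.sum_filter]
    _ = nuP μ X Y := by
        apply Finset.sum_eq_single_of_mem
        · refine Finset.mem_filter.mpr ⟨Finset.mem_univ Y, Finset.Subset.refl Y, ?_⟩
          rw [← Finset.disjoint_iff_inter_eq_empty]
          exact (extE_disj Y).symm
        · intro W hW hne
          obtain ⟨-, hYW, hint⟩ := Finset.mem_filter.mp hW
          by_cases hWc : SComplex W
          · exact absurd (eq_of_no_external hWc hYW hY.1 hint) hne
          · exact nuP_not_complex μ X hXc hWc

omit [MeasurableSpace Ω] in
private lemma prod_card_fiber (hn : 1 ≤ n) (p : ℕ → ℝ) (S : Finset (Finset (Fin n)))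
    (hS : ∀ σ ∈ S, σ ≠ ∅) :
    ∏ i : Fin n, p i.1 ^ scount S (i.1 + 1) = ∏ σ ∈ S, p (σ.card - 1) := by
  have hgm : ∀ σ : Finset (Fin n), min (σ.card - 1) (n - 1) < n := by
    intro σ
    omega
  set gm : Finset (Fin n) → Fin n := fun σ => ⟨min (σ.card - 1) (n - 1), hgm σ⟩ with hgmdef
  rw [← Finset.prod_fiberwise_of_maps_to (g := gm) (t := Finset.univ)
    (fun σ _ => Finset.mem_univ _) (fun σ => p (σ.card - 1))]
  apply Finset.prod_congr rfl
  intro i _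
  have hfil : S.filter (fun σ => gm σ = i) = S.filter (fun σ => σ.card = i.1 + 1) := by
    ext σ
    simp only [Finset.mem_filter]
    constructor
    · rintro ⟨hσS, hgσ⟩
      have h1 : 1 ≤ σ.card := Nat.one_le_iff_ne_zero.mpr
        (fun h => hS σ hσS (Finset.card_eq_zero.mp h))
      have h2 : σ.card ≤ n := le_trans (Finset.card_le_univ σ) (by simp)
      have : min (σ.card - 1) (n - 1) = i.1 := congrArg Fin.val hgσ
      have hi : i.1 < n := i.2
      refine ⟨hσS, ?_⟩
      omega
    · rintro ⟨hσS, hcard⟩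
      have h2 : σ.card ≤ n := le_trans (Finset.card_le_univ σ) (by simp)
      have hi : i.1 < n := i.2
      refine ⟨hσS, ?_⟩
      apply Fin.ext
      simp only [hgmdef]
      omega
  rw [hfil]
  have : ∀ σ ∈ S.filter (fun σ => σ.card = i.1 + 1), p (σ.card - 1) = p i.1 := by
    intro σ hσ
    have := (Finset.mem_filter.mp hσ).2
    rw [this]
    simp
  rw [Finset.prod_congr rfl this, Finset.prod_const]
  rfl

omit [MeasurableSpace Ω] in
private lemma scount_extE (Y : Finset (Finset (Fin n))) (k : ℕ) :
    scount (extE Y) (k + 1) = ecount Y k := by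
  unfold scount ecount extE
  rw [Finset.filter_filter]
  congr 1
  ext σ
  simp only [Finset.mem_filter, Finset.mem_univ, true_and]
  tauto

end PointLayer
section Final

variable {n : ℕ} {Ω : Type*} [MeasurableSpace Ω] (μ : Measure Ω)
  (X : Ω → Finset (Finset (Fin n)))

private lemma pPar_mem [IsProbabilityMeasure μ] (k : ℕ) :
    pPar μ X k ∈ Set.Icc (0 : ℝ) 1 := by
  rw [pPar_eq]
  split
  · rename_i h
    constructor
    · exact div_nonneg (prb_nonneg μ _) (le_of_lt h)
    · rw [div_le_one h]
      exact FP_mono μ X (Finset.erase_subset _ _)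
  · exact ⟨le_refl 0, zero_le_one⟩

omit [MeasurableSpace Ω] in
private lemma prod_neg_eq (pp : Finset (Fin n) → ℝ) (S : Finset (Finset (Fin n))) :
    ∏ σ ∈ S, (-(pp σ)) = (-1 : ℝ) ^ S.card * ∏ σ ∈ S, pp σ := by
  calc ∏ σ ∈ S, (-(pp σ)) = ∏ σ ∈ S, ((-1 : ℝ) * pp σ) := by
        apply Finset.prod_congr rfl
        intro σ _
        ring
    _ = (∏ _σ ∈ S, (-1 : ℝ)) * ∏ σ ∈ S, pp σ := Finset.prod_mul_distrib
    _ = (-1 : ℝ) ^ S.card * ∏ σ ∈ S, pp σ := by rw [Finset.prod_const]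

end Final
/-- every homogeneous and spatially independent random subcomplex of `Δₙ`
is a multi-parameter random simplicial complex, with parameters
`p_k = P(σ_k ∈ X | ∂σ_k ⊆ X)` for a `k`-simplex `σ_k` (and `p_k = 0` if
`P(∂σ_k ⊆ X) = 0`). -/
theorem homogeneous_spatiallyIndependent_isMultiParam (n : ℕ) (hn : 1 ≤ n)
    {Ω : Type*} [MeasurableSpace Ω] (μ : Measure Ω) [IsProbabilityMeasure μ]
    (X : Ω → Finset (Finset (Fin n)))
    (hmeas : ∀ Y, MeasurableSet {ω | X ω = Y})
    (hXc : ∀ ω, SComplex (X ω))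
    (hhom : Homogeneous μ X) (hsi : SpatInd μ X) :
    ∃ p : Fin n → ℝ, (∀ i, p i ∈ Set.Icc (0 : ℝ) 1) ∧
      (∀ Y : Finset (Finset (Fin n)), SComplex Y →
        prb μ {ω | X ω = Y} = mpWeight p Y) ∧
      ∀ k : Fin n,
        p k = if 0 < prb μ {ω | (stdSimp n k.1).powerset.erase (stdSimp n k.1) ⊆ X ω} then
            condP μ {ω | stdSimp n k.1 ∈ X ω}
              {ω | (stdSimp n k.1).powerset.erase (stdSimp n k.1) ⊆ X ω}
          else 0 := by
  classical
  refine ⟨fun i => pPar μ X i.1, fun i => pPar_mem μ X i.1, ?_, fun k => rfl⟩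
  intro Y hY
  show nuP μ X Y = _
  rw [nuP_signed μ X hmeas hXc hY]
  set pp : Finset (Fin n) → ℝ := fun σ => pPar μ X (σ.card - 1) with hppdef
  set W0 : ℝ := ∏ i : Fin n, pPar μ X i.1 ^ scount Y (i.1 + 1) with hW0def
  have hW0 : ∀ S ∈ (extE Y).powerset,
      FP μ X (Y ∪ S) = W0 * ∏ σ ∈ S, pp σ := by
    intro S hS
    have hSsub : S ⊆ extE Y := Finset.mem_powerset.mp hS
    rw [FP_prod μ X hmeas hXc hhom hsi _ (union_ext_complex hY hSsub)]
    have hdisj : Disjoint Y S := Finset.disjoint_of_subset_right hSsub (extE_disj Y)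
    calc ∏ i : Fin n, pPar μ X i.1 ^ scount (Y ∪ S) (i.1 + 1)
        = ∏ i : Fin n, (pPar μ X i.1 ^ scount Y (i.1 + 1)) *
            (pPar μ X i.1 ^ scount S (i.1 + 1)) := by
          apply Finset.prod_congr rfl
          intro i _
          rw [scount_union hdisj, pow_add]
      _ = W0 * ∏ i : Fin n, pPar μ X i.1 ^ scount S (i.1 + 1) := by
          rw [Finset.prod_mul_distrib]
      _ = W0 * ∏ σ ∈ S, pp σ := by
          rw [prod_card_fiber hn _ S (fun σ hσ => extE_nonempty_simp hY (hSsub hσ))]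
  calc ∑ S ∈ (extE Y).powerset, (-1 : ℝ) ^ S.card * FP μ X (Y ∪ S)
      = ∑ S ∈ (extE Y).powerset, (-1 : ℝ) ^ S.card * (W0 * ∏ σ ∈ S, pp σ) :=
        Finset.sum_congr rfl (fun S hS => by rw [hW0 S hS])
    _ = W0 * ∑ S ∈ (extE Y).powerset, ∏ σ ∈ S, (-(pp σ)) := by
        rw [Finset.mul_sum]
        apply Finset.sum_congr rfl
        intro S _
        rw [prod_neg_eq]
        ring
    _ = W0 * ∏ σ ∈ extE Y, (1 - pp σ) := by
        congr 1
        have h := Finset.prod_add (fun σ => -(pp σ)) (fun _ => (1 : ℝ)) (extE Y)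
        simp only [Finset.prod_const_one, mul_one] at h
        rw [← h]
        apply Finset.prod_congr rfl
        intro σ _
        ring
    _ = W0 * ∏ i : Fin n, (1 - pPar μ X i.1) ^ ecount Y i.1 := by
        congr 1
        have h := prod_card_fiber hn (fun m => 1 - pPar μ X m) (extE Y)
          (fun σ hσ => extE_nonempty_simp hY hσ)
        rw [← h]
        apply Finset.prod_congr rfl
        intro i _
        rw [scount_extE]
    _ = mpWeight (fun i : Fin n => pPar μ X i.1) Y := by
        unfold mpWeight
        rw [Finset.prod_mul_distrib, hW0def]
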